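/- In the odd cycle C_{2n+1}, every center set A satisfies |A| ≤ n or |A| = 2n+1. -/

import Mathlib

/-- The `S`-eccentricity of a vertex `v`. -/
noncomputable def sEcc {V : Type*} (G : SimpleGraph V) (S : Finset V) (v : V) : ℕ :=
  S.sup fun x => G.dist v x

/-- The `S`-center of `G`. -/
noncomputable def sCenter {V : Type*} (G : SimpleGraph V) (S : Finset V) : Set V :=
  {v | ∀ w, sEcc G S v ≤ sEcc G S w}

/-- `A` is a center set of `G` if it is the `S`-center for some nonempty set `S`. -/
def IsCenterSet {V : Type*} (G : SimpleGraph V) (A : Set V) : Prop :=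
  ∃ S : Finset V, S.Nonempty ∧ sCenter G S = A

open Fin.CommRing

section Aux

/-- val pairing for differences in `Fin N`. -/
lemma fin_pair {N : ℕ} [NeZero N] (x y : Fin N) :
    (x - y).val + (y - x).val = 0 ∨ (x - y).val + (y - x).val = N := by
  have h0 : ((x - y) + (y - x)) = (0 : Fin N) := by ring
  have hv : ((x - y).val + (y - x).val) % N = 0 := by
    rw [← Fin.val_add, h0, Fin.val_zero]
  obtain ⟨k, hk⟩ := Nat.dvd_of_mod_eq_zero hv
  have hx : (x - y).val < N := (x - y).isLt
  have hy : (y - x).val < N := (y - x).isLt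
  have hNpos : 0 < N := Nat.pos_of_ne_zero (NeZero.ne N)
  have hk2 : k < 2 := by
    by_contra hc
    push_neg at hc
    have : N * 2 ≤ N * k := Nat.mul_le_mul_left N hc
    omega
  interval_cases k <;> omega

lemma cycle_conn {N : ℕ} (hN : 3 ≤ N) : (SimpleGraph.cycleGraph N).Connected := by
  obtain ⟨M, rfl⟩ : ∃ M, N = M + 1 := ⟨N - 1, by omega⟩
  exact SimpleGraph.cycleGraph_connected

lemma cycle_dist_add_nat {N : ℕ} [NeZero N] (hN : 3 ≤ N) (u : Fin N) (k : ℕ) :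
    (SimpleGraph.cycleGraph N).dist u (u + (k : Fin N)) ≤ k := by
  induction k with
  | zero => simp [SimpleGraph.dist_self]
  | succ k ih =>
    have h1 : (u + (((k : ℕ) + 1 : ℕ) : Fin N)) - (u + ((k : ℕ) : Fin N)) = 1 := by
      push_cast
      ring
    have hadj : (SimpleGraph.cycleGraph N).Adj (u + ((k : ℕ) : Fin N))
        (u + (((k : ℕ) + 1 : ℕ) : Fin N)) := by
      rw [SimpleGraph.cycleGraph_adj']
      right
      rw [h1, Fin.val_one']
      exact Nat.mod_eq_of_lt (by omega)
    have htri := (cycle_conn hN).dist_triangle (u := u) (v := u + ((k : ℕ) : Fin N))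
      (w := u + (((k : ℕ) + 1 : ℕ) : Fin N))
    have hd1 : (SimpleGraph.cycleGraph N).dist (u + ((k : ℕ) : Fin N))
        (u + (((k : ℕ) + 1 : ℕ) : Fin N)) = 1 := by
      rw [SimpleGraph.dist_eq_one_iff_adj]
      exact hadj
    omega

lemma cycle_walk_lb {N : ℕ} [NeZero N] (hN : 3 ≤ N) {u v : Fin N}
    (p : (SimpleGraph.cycleGraph N).Walk u v) :
    min (v - u).val (u - v).val ≤ p.length := by
  induction p with
  | nil => simp
  | @cons u w v h p ih =>
    rw [SimpleGraph.Walk.length_cons]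
    rw [SimpleGraph.cycleGraph_adj'] at h
    have ha := fin_pair w u
    have hb := fin_pair v w
    have hc := fin_pair v u
    have hsum : (v - u).val = ((w - u).val + (v - w).val) % N := by
      have : v - u = (w - u) + (v - w) := by ring
      rw [this, Fin.val_add]
    have h1 : (w - u).val < N := (w - u).isLt
    have h2 : (v - w).val < N := (v - w).isLt
    have hsum' : (v - u).val = (w - u).val + (v - w).val ∨
        (v - u).val + N = (w - u).val + (v - w).val := by
      rcases Nat.lt_or_ge ((w - u).val + (v - w).val) N with hlt | hge
      · left; rw [hsum, Nat.mod_eq_of_lt hlt]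
      · right
        rw [hsum, Nat.mod_eq_sub_mod hge, Nat.mod_eq_of_lt (by omega)]
        omega
    omega

lemma cycle_dist_eq {N : ℕ} [NeZero N] (hN : 3 ≤ N) (u v : Fin N) :
    (SimpleGraph.cycleGraph N).dist u v = min (v - u).val (u - v).val := by
  apply le_antisymm
  · apply le_min
    · have h := cycle_dist_add_nat hN u (v - u).val
      rwa [Fin.cast_val_eq_self, show u + (v - u) = v from by ring] at h
    · have h := cycle_dist_add_nat hN v (u - v).val
      rw [Fin.cast_val_eq_self, show v + (u - v) = u from by ring] at h
      rwa [SimpleGraph.dist_comm] at h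
  · obtain ⟨p, hp⟩ := (cycle_conn hN).exists_walk_length_eq_dist u v
    rw [← hp]
    exact cycle_walk_lb hN p

end Aux

/-- In the odd cycle `C_{2n+1}`, every center set `A` satisfies `|A| ≤ n` or
`|A| = 2n + 1`. -/
theorem card_centerSet_oddCycle (n : ℕ) (hn : 1 ≤ n) (A : Set (Fin (2 * n + 1)))
    (hA : IsCenterSet (SimpleGraph.cycleGraph (2 * n + 1)) A) :
    A.ncard ≤ n ∨ A.ncard = 2 * n + 1 := by
  classical
  obtain ⟨S, hS, rfl⟩ := hA
  have hN : 3 ≤ 2 * n + 1 := by omega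
  haveI : NeZero (2 * n + 1) := ⟨by omega⟩

  set G := SimpleGraph.cycleGraph (2 * n + 1) with hG
  set f : Fin (2 * n + 1) → ℕ := sEcc G S with hf
  -- diameter bound
  have hdiam : ∀ v, f v ≤ n := by
    intro v
    apply Finset.sup_le
    intro x hx
    rw [cycle_dist_eq hN]
    have := fin_pair x v
    omega
  -- a global minimizer
  obtain ⟨a0, -, ha0⟩ := Finset.exists_min_image (Finset.univ : Finset (Fin (2 * n + 1))) f
    ⟨⟨0, by omega⟩, Finset.mem_univ _⟩
  set m := f a0 with hm
  have ha0' : ∀ w, m ≤ f w := fun w => ha0 w (Finset.mem_univ w)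
  have hmem : ∀ v, v ∈ sCenter G S ↔ f v ≤ m := by
    intro v
    constructor
    · intro h; exact h a0
    · intro h w; exact h.trans (ha0' w)
  by_cases huniv : sCenter G S = Set.univ
  · right
    rw [huniv, Set.ncard_univ, Nat.card_eq_fintype_card, Fintype.card_fin]
  · left
    obtain ⟨z, hz⟩ := (Set.ne_univ_iff_exists_notMem _).mp huniv
    have hmn : m < n := by
      have h1 : ¬ f z ≤ m := fun h => hz ((hmem z).mpr h)
      have := hdiam z
      omega
    by_cases hm0 : m = 0
    · -- the center is a single vertex
      obtain ⟨x0, hx0⟩ := hS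
      have hsub : sCenter G S ⊆ {x0} := by
        intro v hv
        have hfv : f v = 0 := by
          have := (hmem v).mp hv
          omega
        have hd : G.dist v x0 = 0 := by
          have h1 : G.dist v x0 ≤ f v := Finset.le_sup hx0
          omega
        have := ((cycle_conn hN).dist_eq_zero_iff).mp hd
        simp [this]
      calc (sCenter G S).ncard ≤ ({x0} : Set (Fin (2 * n + 1))).ncard :=
            Set.ncard_le_ncard hsub (Set.toFinite _)
        _ = 1 := Set.ncard_singleton x0
        _ ≤ n := hn
    · -- 1 ≤ m < n : gap argument
      have hm1 : 1 ≤ m := by omega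
      set o : Fin (2 * n + 1) := ((1 : ℕ) : Fin (2 * n + 1)) with ho
      set t : Fin (2 * n + 1) := ((2 : ℕ) : Fin (2 * n + 1)) with ht
      have hoval : o.val = 1 := Fin.val_cast_of_lt (by omega)
      have htval : t.val = 2 := Fin.val_cast_of_lt (by omega)
      have hto : t = o + o := by
        rw [ho, ht]
        push_cast
        ring
      -- key: a vertex whose difference with some x ∈ S has val m+1 or m+2 is not central
      have hkey : ∀ (a x : Fin (2 * n + 1)), x ∈ S → ∀ j : ℕ, 1 ≤ j → j ≤ 2 →
          ((a - x).val = m + j ∨ (x - a).val = m + j) → a ∉ sCenter G S := by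
        intro a x hxS j hj1 hj2 hax ha
        have hfa : f a ≤ m := (hmem a).mp ha
        have hd : G.dist a x ≤ f a := Finset.le_sup hxS
        rw [cycle_dist_eq hN] at hd
        have hp := fin_pair x a
        omega
      -- value computation helper
      have hvadd : ∀ (z : Fin (2 * n + 1)) (j : Fin (2 * n + 1)), z.val + j.val < 2 * n + 1 →
          (z + j).val = z.val + j.val := by
        intro z j h
        rw [Fin.val_add, Nat.mod_eq_of_lt h]
      -- the gap lemma
      have hgap : ∀ a ∈ sCenter G S,
          ((a + o) ∉ sCenter G S ∧ (a + t) ∉ sCenter G S) ∨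
          ((a - o) ∉ sCenter G S ∧ (a - t) ∉ sCenter G S) := by
        intro a ha
        have hfa : f a = m := le_antisymm ((hmem a).mp ha) (ha0' a)
        obtain ⟨x, hxS, hxval⟩ := Finset.exists_mem_eq_sup S hS (fun x => G.dist a x)
        have hdax : G.dist a x = m := by rw [← hxval]; exact hfa
        rw [cycle_dist_eq hN] at hdax
        have hcases : (a - x).val = m ∨ (x - a).val = m := by omega
        rcases hcases with hax | hxa
        · -- x behind a : gap ahead
          left
          constructor
          · refine hkey (a + o) x hxS 1 le_rfl (by omega) (Or.inl ?_)
            have he : (a + o) - x = (a - x) + o := by ring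
            rw [he, hvadd _ _ (by omega)]
            omega
          · refine hkey (a + t) x hxS 2 (by omega) le_rfl (Or.inl ?_)
            have he : (a + t) - x = (a - x) + t := by ring
            rw [he, hvadd _ _ (by omega)]
            omega
        · -- x ahead of a : gap behind
          right
          constructor
          · refine hkey (a - o) x hxS 1 le_rfl (by omega) (Or.inr ?_)
            have he : x - (a - o) = (x - a) + o := by ring
            rw [he, hvadd _ _ (by omega)]
            omega
          · refine hkey (a - t) x hxS 2 (by omega) le_rfl (Or.inr ?_)
            have he : x - (a - t) = (x - a) + t := by ring
            rw [he, hvadd _ _ (by omega)]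
            omega
      -- the injection into the complement
      set φ : Fin (2 * n + 1) → Fin (2 * n + 1) := fun a => if a + o ∈ sCenter G S then a - o else a + o with hφ
      have hmaps : ∀ a ∈ sCenter G S, φ a ∈ (sCenter G S)ᶜ := by
        intro a ha
        rw [hφ]
        by_cases h : a + o ∈ sCenter G S
        · simp only [h, if_true]
          rcases hgap a ha with ⟨h1, _⟩ | ⟨h1, _⟩
          · exact absurd h h1
          · exact h1
        · simp only [h, if_false]
          exact h
      have hinj : Set.InjOn φ (sCenter G S) := by
        intro a ha b hb hab
        rw [hφ] at hab
        by_cases h1 : a + o ∈ sCenter G S <;> by_cases h2 : b + o ∈ sCenter G S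
        · simp only [h1, h2, if_true] at hab
          have : a - o + o = b - o + o := by rw [hab]
          simpa using this
        · simp only [h1, h2, if_true, if_false] at hab
          -- a - o = b + o, so b = a - t
          have hb' : b = a - t := by
            rw [hto]
            have : b + o = a - o := hab.symm
            have h3 : b = a - o - o := by
              rw [← this]; ring
            rw [h3]; ring
          rcases hgap a ha with ⟨h3, _⟩ | ⟨_, h3⟩
          · exact absurd h1 h3
          · exact absurd (hb' ▸ hb) h3
        · simp only [h1, h2, if_false, if_true] at hab
          have ha' : a = b - t := by
            rw [hto]
            have h3 : a = b - o - o := by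
              rw [← hab]; ring
            rw [h3]; ring
          rcases hgap b hb with ⟨h3, _⟩ | ⟨_, h3⟩
          · exact absurd h2 h3
          · exact absurd (ha' ▸ ha) h3
        · simp only [h1, h2, if_false] at hab
          have : a + o - o = b + o - o := by rw [hab]
          simpa using this
      have hle : (sCenter G S).ncard ≤ ((sCenter G S)ᶜ).ncard :=
        Set.ncard_le_ncard_of_injOn φ hmaps hinj (Set.toFinite _)
      have hcompl : (sCenter G S).ncard + ((sCenter G S)ᶜ).ncard = 2 * n + 1 := by
        rw [Set.ncard_add_ncard_compl, Nat.card_eq_fintype_card, Fintype.card_fin]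
      omega
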